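/- arXiv:0808.3351 — 5 statements merged into one kernel-verified Lean document; each statement's English description precedes it below -/
import Mathlib

section
/- Let B ∈ V with 2B ∈ L, and assume the fractional part of B·h equals 1/2. Then for every u ∈ L and every integer k, the fractional part of (B + u + (k/2)h)² equals the fractional part of B². (In other words, if {B·h} = 1/2 then the fractional part {B²} is unchanged when B is replaced by B + u + (k/2)h, so it does not depend on the choice of the half-integral lift B.) -/
/-- Let `V` be a `ℚ`-vector space with a symmetric bilinear form `φ`,
`L ⊆ V` a `ℤ`-submodule on which `φ` is integer-valued, and `h ∈ L` with `h² = 2`.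
If `B ∈ V` satisfies `2B ∈ L` and the fractional part of `B·h` is `1/2`, then for
every `u ∈ L` and every integer `k`, the fractional part of `(B + u + (k/2)h)²`
equals the fractional part of `B²`. -/
theorem fract_B_sq_independent_of_lift
    {V : Type*} [AddCommGroup V] [Module ℚ V]
    (φ : LinearMap.BilinForm ℚ V) (hφsymm : ∀ x y : V, φ x y = φ y x)
    (L : Submodule ℤ V)
    (hLint : ∀ u ∈ L, ∀ v ∈ L, ∃ n : ℤ, φ u v = (n : ℚ))
    (h : V) (hhL : h ∈ L) (hh2 : φ h h = 2)
    (B : V) (hB : (2 : ℚ) • B ∈ L)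
    (hBh : Int.fract (φ B h) = 1 / 2) :
    ∀ u ∈ L, ∀ k : ℤ,
      Int.fract (φ (B + u + ((k : ℚ) / 2) • h) (B + u + ((k : ℚ) / 2) • h))
        = Int.fract (φ B B) := by
  intro u hu k
  obtain ⟨m, hm⟩ := hLint _ hB u hu
  obtain ⟨a, ha⟩ := hLint u hu u hu
  obtain ⟨b, hb⟩ := hLint u hu h hhL
  have hBhval : φ B h = (⌊φ B h⌋ : ℚ) + 1/2 := by
    have := Int.fract_add_floor (φ B h)
    rw [hBh] at this; linarith
  have hBu : (2:ℚ) * φ B u = (m : ℚ) := by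
    have : φ ((2:ℚ) • B) u = (m : ℚ) := hm
    simpa [map_smul] using this
  rw [Int.fract_eq_fract]
  obtain ⟨c, hc⟩ := Int.even_mul_succ_self k
  refine ⟨m + k * ⌊φ B h⌋ + a + k * b + c, ?_⟩
  have hcq : (k : ℚ) * (k + 1) = c + c := by exact_mod_cast hc
  simp only [map_add, map_smul, LinearMap.add_apply, LinearMap.smul_apply, smul_eq_mul]
  rw [hφsymm u B, hφsymm h B, hφsymm h u]
  push_cast
  rw [ha, hb, hh2]
  linear_combination hBu + (k : ℚ) * hBhval + (1/2) * hcq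
end

section
/- Let B ∈ V with 2B ∈ L and B ∉ L + ℚh. Define Λ_B = { (r, w, s) ∈ ℤ × L × ℤ : there exists d ∈ ℚ with w = rB + dh }, a ℤ-submodule of ℚ × V × ℚ. Then Λ_B equals the ℤ-span of the three elements (2, 2B, 0), (0, h, 0) and (0, 0, 1). (In particular, every element (r, w, s) of Λ_B has r even, and in the representation w = rB + dh the coefficient d is an integer.) -/
/-- The lattice `Λ_B ⊆ ℚ × V × ℚ`: triples `(r, w, s)` with `r, s` integers,
`w ∈ L`, and `w = rB + dh` for some rational `d`.  It models the twisted integral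
Hodge lattice `H^{*,*}(S, B, ℤ)`, the image of the `B`-twisted Chern character. -/
def twistedLattice {V : Type*} [AddCommGroup V] [Module ℚ V]
    (L : Submodule ℤ V) (B h : V) : Set (ℚ × V × ℚ) :=
  { p | (∃ r : ℤ, p.1 = (r : ℚ)) ∧ (∃ s : ℤ, p.2.2 = (s : ℚ)) ∧
        p.2.1 ∈ L ∧ ∃ d : ℚ, p.2.1 = p.1 • B + d • h }

/-- Let `V` be a `ℚ`-vector space with a symmetric bilinear form `φ`,
`L ⊆ V` a `ℤ`-submodule on which `φ` is integer-valued, and `h ∈ L` with `h² = 2`.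
If `B ∈ V` satisfies `2B ∈ L` and `B ∉ L + ℚh`, then the lattice `Λ_B` equals the
`ℤ`-span of `(2, 2B, 0)`, `(0, h, 0)` and `(0, 0, 1)`. -/
theorem twistedLattice_eq_span
    {V : Type*} [AddCommGroup V] [Module ℚ V]
    (φ : LinearMap.BilinForm ℚ V) (hφsymm : ∀ x y : V, φ x y = φ y x)
    (L : Submodule ℤ V)
    (hLint : ∀ u ∈ L, ∀ v ∈ L, ∃ n : ℤ, φ u v = (n : ℚ))
    (h : V) (hhL : h ∈ L) (hh2 : φ h h = 2)
    (B : V) (hB : (2 : ℚ) • B ∈ L)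
    (hBnt : ¬ ∃ u ∈ L, ∃ d : ℚ, B = u + d • h) :
    twistedLattice L B h =
      ↑(Submodule.span ℤ
        ({((2 : ℚ), ((2 : ℚ) • B, (0 : ℚ))),
          ((0 : ℚ), (h, (0 : ℚ))),
          ((0 : ℚ), ((0 : V), (1 : ℚ)))} : Set (ℚ × V × ℚ))) := by
  have g1mem : ((2 : ℚ), ((2 : ℚ) • B, (0 : ℚ))) ∈
      Submodule.span ℤ ({((2 : ℚ), ((2 : ℚ) • B, (0 : ℚ))),
        ((0 : ℚ), (h, (0 : ℚ))), ((0 : ℚ), ((0 : V), (1 : ℚ)))} : Set (ℚ × V × ℚ)) :=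
    Submodule.subset_span (by simp)
  have g2mem : ((0 : ℚ), (h, (0 : ℚ))) ∈
      Submodule.span ℤ ({((2 : ℚ), ((2 : ℚ) • B, (0 : ℚ))),
        ((0 : ℚ), (h, (0 : ℚ))), ((0 : ℚ), ((0 : V), (1 : ℚ)))} : Set (ℚ × V × ℚ)) :=
    Submodule.subset_span (by simp)
  have g3mem : ((0 : ℚ), ((0 : V), (1 : ℚ))) ∈
      Submodule.span ℤ ({((2 : ℚ), ((2 : ℚ) • B, (0 : ℚ))),
        ((0 : ℚ), (h, (0 : ℚ))), ((0 : ℚ), ((0 : V), (1 : ℚ)))} : Set (ℚ × V × ℚ)) :=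
    Submodule.subset_span (by simp)
  ext ⟨r, w, s⟩
  constructor
  · rintro ⟨⟨r', hr⟩, ⟨s', hs⟩, hwL, d, hw⟩
    replace hr : r = (r' : ℚ) := hr
    replace hs : s = (s' : ℚ) := hs
    replace hwL : w ∈ L := hwL
    replace hw : w = r • B + d • h := hw
    -- r' is even
    have hreven : ∃ k : ℤ, r' = 2 * k := by
      rcases Int.even_or_odd r' with ⟨k, hk⟩ | ⟨k, hk⟩
      · exact ⟨k, by omega⟩
      · exfalso
        apply hBnt
        refine ⟨w - (k : ℤ) • ((2 : ℚ) • B), sub_mem hwL (Submodule.smul_mem _ _ hB),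
          -d, ?_⟩
        have : (k : ℤ) • ((2 : ℚ) • B) = ((2 * k : ℤ) : ℚ) • B := by
          rw [← Int.cast_smul_eq_zsmul ℚ]
          push_cast
          rw [smul_smul]
          ring_nf
        rw [this, hw, hr, hk]
        push_cast
        module
    obtain ⟨k, hk⟩ := hreven
    -- d • h ∈ L
    have hdhL : d • h ∈ L := by
      have : d • h = w - (k : ℤ) • ((2 : ℚ) • B) := by
        have : (k : ℤ) • ((2 : ℚ) • B) = ((2 * k : ℤ) : ℚ) • B := by
          rw [← Int.cast_smul_eq_zsmul ℚ]
          push_cast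
          rw [smul_smul]
          ring_nf
        rw [this, hw, hr, hk]
        push_cast
        module
      rw [this]
      exact sub_mem hwL (Submodule.smul_mem _ _ hB)
    -- 2d is an integer
    obtain ⟨n, hn⟩ := hLint _ hdhL _ hhL
    have hφd : φ (d • h) h = 2 * d := by
      rw [map_smul]
      simp [hh2]
      ring
    have h2d : 2 * d = (n : ℚ) := by rw [← hφd, hn]
    -- n is even, so d is an integer
    have hneven : ∃ m : ℤ, n = 2 * m := by
      rcases Int.even_or_odd n with ⟨m, hm⟩ | ⟨m, hm⟩
      · exact ⟨m, by omega⟩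
      · exfalso
        have hhalf : ((1 : ℚ)/2) • h ∈ L := by
          have : ((1 : ℚ)/2) • h = d • h - (m : ℤ) • h := by
            rw [← Int.cast_smul_eq_zsmul ℚ, ← sub_smul]
            congr 1
            have : d = (n : ℚ) / 2 := by linarith
            rw [this, hm]
            push_cast
            ring
          rw [this]
          exact sub_mem hdhL (Submodule.smul_mem _ _ hhL)
        obtain ⟨j, hj⟩ := hLint _ hhalf _ hhalf
        simp only [map_smul, LinearMap.smul_apply, smul_eq_mul, hh2] at hj
        have h4 : (4 : ℚ) * ((1:ℚ)/2 * ((1:ℚ)/2 * 2)) = 4 * (j : ℚ) := by rw [hj]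
        norm_num at h4
        have : (2 : ℤ) * j = 1 := by exact_mod_cast (by linarith : (2:ℚ) * j = 1)
        omega
    obtain ⟨m, hm⟩ := hneven
    have hd : d = (m : ℚ) := by
      have : 2 * d = 2 * (m : ℚ) := by rw [h2d, hm]; push_cast; ring
      linarith
    -- now exhibit the combination
    have : (r, w, s) = (k : ℤ) • ((2 : ℚ), ((2 : ℚ) • B, (0 : ℚ)))
        + (m : ℤ) • ((0 : ℚ), (h, (0 : ℚ)))
        + (s' : ℤ) • ((0 : ℚ), ((0 : V), (1 : ℚ))) := by
      refine Prod.ext ?_ (Prod.ext ?_ ?_)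
      · simp only [Prod.fst_add, Prod.smul_fst, zsmul_eq_mul]
        rw [hr, hk]; push_cast; ring
      · simp only [Prod.snd_add, Prod.smul_snd, Prod.fst_add, Prod.smul_fst]
        rw [hw, hr, hk, hd, ← Int.cast_smul_eq_zsmul ℚ (k : ℤ),
          ← Int.cast_smul_eq_zsmul ℚ (m : ℤ), ← Int.cast_smul_eq_zsmul ℚ (s' : ℤ)]
        push_cast
        module
      · simp only [Prod.snd_add, Prod.smul_snd, zsmul_eq_mul]
        rw [hs]; push_cast; ring
    rw [this]
    exact Submodule.add_mem _ (Submodule.add_mem _ (Submodule.smul_mem _ _ g1mem)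
      (Submodule.smul_mem _ _ g2mem)) (Submodule.smul_mem _ _ g3mem)
  · intro hp
    have key : ∀ p ∈ Submodule.span ℤ ({((2 : ℚ), ((2 : ℚ) • B, (0 : ℚ))),
        ((0 : ℚ), (h, (0 : ℚ))), ((0 : ℚ), ((0 : V), (1 : ℚ)))} : Set (ℚ × V × ℚ)),
        p ∈ twistedLattice L B h := by
      intro p hp
      induction hp using Submodule.span_induction with
      | mem x hx =>
        rcases hx with hx | hx | hx
        · subst hx
          exact ⟨⟨2, by norm_num⟩, ⟨0, by norm_num⟩, hB, 0, by simp⟩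
        · subst hx
          exact ⟨⟨0, by norm_num⟩, ⟨0, by norm_num⟩, hhL, 1, by simp⟩
        · simp only [Set.mem_singleton_iff] at hx
          subst hx
          exact ⟨⟨0, by norm_num⟩, ⟨1, by norm_num⟩, Submodule.zero_mem _, 0, by simp⟩
      | zero =>
        exact ⟨⟨0, by norm_num⟩, ⟨0, by norm_num⟩, Submodule.zero_mem _, 0, by simp⟩
      | add x y hx hy ihx ihy =>
        obtain ⟨⟨rx, hrx⟩, ⟨sx, hsx⟩, hwx, dx, hdx⟩ := ihx
        obtain ⟨⟨ry, hry⟩, ⟨sy, hsy⟩, hwy, dy, hdy⟩ := ihy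
        refine ⟨⟨rx + ry, by simp [hrx, hry]⟩, ⟨sx + sy, by simp [hsx, hsy]⟩,
          Submodule.add_mem _ hwx hwy, dx + dy, ?_⟩
        show x.2.1 + y.2.1 = (x.1 + y.1) • B + (dx + dy) • h
        rw [hdx, hdy]
        module
      | smul n x hx ihx =>
        obtain ⟨⟨rx, hrx⟩, ⟨sx, hsx⟩, hwx, dx, hdx⟩ := ihx
        refine ⟨⟨n * rx, by simp [hrx, zsmul_eq_mul]⟩,
          ⟨n * sx, by simp [hsx, zsmul_eq_mul]⟩,
          Submodule.smul_mem _ _ hwx, (n : ℚ) * dx, ?_⟩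
        show n • x.2.1 = (n • x.1) • B + ((n : ℚ) * dx) • h
        rw [← Int.cast_smul_eq_zsmul ℚ n x.2.1, hdx, zsmul_eq_mul]
        module
    exact key _ hp
end

section
/- Let B ∈ V with 2B ∈ L and B ∉ L + ℚh, and assume that the fractional parts of B·h and of B² both equal 1/2. Define the symmetric bilinear form χ on ℚ × V × ℚ by χ((r₁,w₁,s₁),(r₂,w₂,s₂)) = r₁s₂ + s₁r₂ + 2r₁r₂ − w₁·w₂. Then there exists no pair of vectors v₁, v₂ in the lattice Λ_B = { (r, w, s) ∈ ℤ × L × ℤ : there exists d ∈ ℚ with w = rB + dh } such that χ(v₁,v₂) = 1 and χ(v₂,v₂) = 0. -/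
/-- The Euler form `χ((r₁,w₁,s₁),(r₂,w₂,s₂)) = r₁s₂ + s₁r₂ + 2r₁r₂ − w₁·w₂`
(the Mukai pairing of `ch^B √td(S)`). -/
def eulerForm {V : Type*} [AddCommGroup V] [Module ℚ V]
    (φ : LinearMap.BilinForm ℚ V) (p q : ℚ × V × ℚ) : ℚ :=
  p.1 * q.2.2 + p.2.2 * q.1 + 2 * p.1 * q.1 - φ p.2.1 q.2.1

/-- Mod 2 arithmetic at the heart of the obstruction. -/
lemma no_numerical_point_class_key2 : ∀ x1 x2 x3 x4 x5 x6 x7 x8 : ZMod 2,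
    2*x1*x6 + 2*x4*x3 + 8*x1*x4 -
      (4*x1*x4*x7 + 2*x1*x4 + 2*(x1*x5 + x4*x2)*x8 + (x1*x5 + x4*x2) + 2*x2*x5) = 1 →
    2*x4*x6 + 4*x4*x4 -
      (2*x4*x4*x7 + x4*x4 + 2*x4*x5*x8 + x4*x5 + x5*x5) = 0 → False := by
  decide

/-- The integer-level contradiction. -/
lemma no_numerical_point_class_key (m₁ d₁ s₁ m₂ d₂ s₂ a b : ℤ)
    (h1 : 2*m₁*s₂ + 2*m₂*s₁ + 8*m₁*m₂ -
      (4*m₁*m₂*a + 2*m₁*m₂ + 2*(m₁*d₂ + m₂*d₁)*b + (m₁*d₂ + m₂*d₁) + 2*d₁*d₂) = 1)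
    (h2 : 4*m₂*s₂ + 8*m₂*m₂ -
      (4*m₂*m₂*a + 2*m₂*m₂ + 4*m₂*d₂*b + 2*m₂*d₂ + 2*d₂*d₂) = 0) : False := by
  have h2' : 2*m₂*s₂ + 4*m₂*m₂ - (2*m₂*m₂*a + m₂*m₂ + 2*m₂*d₂*b + m₂*d₂ + d₂*d₂) = 0 := by
    linarith
  have H1 := congrArg (Int.cast : ℤ → ZMod 2) h1
  have H2 := congrArg (Int.cast : ℤ → ZMod 2) h2'
  push_cast at H1 H2
  exact no_numerical_point_class_key2 (m₁ : ZMod 2) d₁ s₁ m₂ d₂ s₂ a b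
    (by linear_combination H1) (by linear_combination H2)

/-- Every element of the twisted lattice has even degree `r = 2m` and integral
twisting parameter `d`. -/
lemma no_numerical_point_class_struct
    {V : Type*} [AddCommGroup V] [Module ℚ V]
    (φ : LinearMap.BilinForm ℚ V) (hφsymm : ∀ x y : V, φ x y = φ y x)
    (L : Submodule ℤ V)
    (hLint : ∀ u ∈ L, ∀ v ∈ L, ∃ n : ℤ, φ u v = (n : ℚ))
    (h : V) (hhL : h ∈ L) (hh2 : φ h h = 2)
    (B : V) (hB : (2 : ℚ) • B ∈ L)
    (hBnt : ¬ ∃ u ∈ L, ∃ d : ℚ, B = u + d • h)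
    (a b : ℤ) (hA : φ B B = (a : ℚ) + 1/2) (hC : φ B h = (b : ℚ) + 1/2)
    (p : ℚ × V × ℚ) (hp : p ∈ twistedLattice L B h) :
    ∃ m f s : ℤ, p.1 = ((2*m : ℤ) : ℚ) ∧ p.2.2 = (s : ℚ) ∧
      p.2.1 = ((2*m : ℤ) : ℚ) • B + ((f : ℤ) : ℚ) • h := by
  obtain ⟨⟨r, hr⟩, ⟨s, hs⟩, hwL, d, hw⟩ := hp
  -- r is even
  obtain ⟨m, hm⟩ : ∃ m : ℤ, r = 2*m := by
    rcases Int.even_or_odd r with ⟨m, hm⟩ | ⟨m, hm⟩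
    · exact ⟨m, by omega⟩
    · exfalso
      apply hBnt
      refine ⟨p.2.1 - m • ((2:ℚ) • B), sub_mem hwL (Submodule.smul_mem _ m hB), -d, ?_⟩
      rw [hw, hr, hm]
      rw [← Int.cast_smul_eq_zsmul ℚ m ((2:ℚ) • B)]
      push_cast
      rw [smul_smul]
      module
  subst hm
  rw [hr] at hw
  -- pairing with h shows 2d is an integer
  obtain ⟨n₁, hn₁⟩ := hLint p.2.1 hwL h hhL
  rw [hw] at hn₁
  simp only [map_add, map_smul, LinearMap.add_apply, LinearMap.smul_apply, smul_eq_mul,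
    hh2, hC] at hn₁
  push_cast at hn₁
  set e : ℤ := n₁ - 2*m*b - m with he
  have hd : d = (e : ℚ)/2 := by push_cast [he]; linarith
  -- integrality of the self-pairing shows e is even
  obtain ⟨n₂, hn₂⟩ := hLint p.2.1 hwL p.2.1 hwL
  rw [hw] at hn₂
  have hhB : φ h B = (b : ℚ) + 1/2 := by rw [hφsymm h B, hC]
  simp only [map_add, map_smul, LinearMap.add_apply, LinearMap.smul_apply, smul_eq_mul,
    hh2, hC, hA, hhB, hd] at hn₂
  push_cast at hn₂
  have heven : Even (e*e) := by
    refine ⟨n₂ - (2*m*(2*m)*a + 2*m*m + 2*m*e*b + m*e), ?_⟩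
    have : ((e*e : ℤ) : ℚ) = ((n₂ - (2*m*(2*m)*a + 2*m*m + 2*m*e*b + m*e) +
        (n₂ - (2*m*(2*m)*a + 2*m*m + 2*m*e*b + m*e)) : ℤ) : ℚ) := by
      push_cast
      linear_combination 2*hn₂
    exact_mod_cast this
  have : Even e := by
    rcases Int.even_or_odd e with he' | he'
    · exact he'
    · exact absurd heven (by simp [Int.even_mul, Int.not_even_iff_odd, he'])
  obtain ⟨f, hf⟩ := this
  refine ⟨m, f, s, hr, hs, ?_⟩
  rw [hw, hd, hf]
  push_cast
  module

/-- Let `V` be a `ℚ`-vector space with a symmetric bilinear form `φ`,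
`L ⊆ V` a `ℤ`-submodule on which `φ` is integer-valued, and `h ∈ L` with `h² = 2`.
Let `B ∈ V` with `2B ∈ L`, `B ∉ L + ℚh`, and with the fractional parts of `B·h`
and `B²` both equal to `1/2`.  Then there is no pair of vectors `v₁, v₂ ∈ Λ_B`
with `χ(v₁,v₂) = 1` and `χ(v₂,v₂) = 0`. -/
theorem no_numerical_point_class
    {V : Type*} [AddCommGroup V] [Module ℚ V]
    (φ : LinearMap.BilinForm ℚ V) (hφsymm : ∀ x y : V, φ x y = φ y x)
    (L : Submodule ℤ V)
    (hLint : ∀ u ∈ L, ∀ v ∈ L, ∃ n : ℤ, φ u v = (n : ℚ))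
    (h : V) (hhL : h ∈ L) (hh2 : φ h h = 2)
    (B : V) (hB : (2 : ℚ) • B ∈ L)
    (hBnt : ¬ ∃ u ∈ L, ∃ d : ℚ, B = u + d • h)
    (hBh : Int.fract (φ B h) = 1 / 2)
    (hBB : Int.fract (φ B B) = 1 / 2) :
    ¬ ∃ v₁ ∈ twistedLattice L B h, ∃ v₂ ∈ twistedLattice L B h,
        eulerForm φ v₁ v₂ = 1 ∧ eulerForm φ v₂ v₂ = 0 := by
  rintro ⟨v₁, hv₁, v₂, hv₂, h12, h22⟩
  set a : ℤ := ⌊φ B B⌋ with ha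
  set b : ℤ := ⌊φ B h⌋ with hb
  have hA : φ B B = (a : ℚ) + 1/2 := by
    rw [Int.fract] at hBB; rw [ha]; linarith
  have hC : φ B h = (b : ℚ) + 1/2 := by
    rw [Int.fract] at hBh; rw [hb]; linarith
  obtain ⟨m₁, d₁, s₁, hr₁, hs₁, hw₁⟩ :=
    no_numerical_point_class_struct φ hφsymm L hLint h hhL hh2 B hB hBnt a b hA hC v₁ hv₁
  obtain ⟨m₂, d₂, s₂, hr₂, hs₂, hw₂⟩ :=
    no_numerical_point_class_struct φ hφsymm L hLint h hhL hh2 B hB hBnt a b hA hC v₂ hv₂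
  have hhB : φ h B = (b : ℚ) + 1/2 := by rw [hφsymm h B, hC]
  rw [eulerForm, hr₁, hs₁, hw₁, hr₂, hs₂, hw₂] at h12
  rw [eulerForm, hr₂, hs₂, hw₂] at h22
  simp only [map_add, map_smul, LinearMap.add_apply, LinearMap.smul_apply, smul_eq_mul,
    hh2, hC, hA, hhB] at h12 h22
  push_cast at h12 h22
  apply no_numerical_point_class_key m₁ d₁ s₁ m₂ d₂ s₂ a b
  · have : ((2*m₁*s₂ + 2*m₂*s₁ + 8*m₁*m₂ -
        (4*m₁*m₂*a + 2*m₁*m₂ + 2*(m₁*d₂ + m₂*d₁)*b + (m₁*d₂ + m₂*d₁) + 2*d₁*d₂) : ℤ) : ℚ)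
        = ((1 : ℤ) : ℚ) := by
      push_cast
      linear_combination h12
    exact_mod_cast this
  · have : ((4*m₂*s₂ + 8*m₂*m₂ -
        (4*m₂*m₂*a + 2*m₂*m₂ + 4*m₂*d₂*b + 2*m₂*d₂ + 2*d₂*d₂) : ℤ) : ℚ)
        = ((0 : ℤ) : ℚ) := by
      push_cast
      linear_combination h22
    exact_mod_cast this
end

section
/- Let a and b be odd integers. Define the symmetric bilinear form χ on ℤ³ by χ((x₁,y₁,z₁),(x₂,y₂,z₂)) = (8−2a)·x₁x₂ − b·(x₁y₂ + y₁x₂) + 2·(x₁z₂ + z₁x₂) − 2·y₁y₂, i.e., the form whose Gram matrix in the standard basis is [[8−2a, −b, 2], [−b, −2, 0], [2, 0, 0]]. Then there exists no pair of vectors v₁, v₂ ∈ ℤ³ with χ(v₁,v₂) = 1 and χ(v₂,v₂) = 0. -/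
/-- The symmetric bilinear form on `ℤ³` with Gram matrix
`[[8−2a, −b, 2], [−b, −2, 0], [2, 0, 0]]` in the standard basis. -/
def gramForm (a b : ℤ) (v w : ℤ × ℤ × ℤ) : ℤ :=
  (8 - 2 * a) * v.1 * w.1 - b * (v.1 * w.2.1 + v.2.1 * w.1)
    + 2 * (v.1 * w.2.2 + v.2.2 * w.1) - 2 * v.2.1 * w.2.1

/-- Let `a` and `b` be odd integers and let `χ` be the symmetric
bilinear form on `ℤ³` with Gram matrix `[[8−2a, −b, 2], [−b, −2, 0], [2, 0, 0]]`.
Then there is no pair of vectors `v₁, v₂ ∈ ℤ³` with `χ(v₁,v₂) = 1` and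
`χ(v₂,v₂) = 0`. -/
theorem gramForm_no_point_class (a b : ℤ) (ha : Odd a) (hb : Odd b) :
    ¬ ∃ v₁ v₂ : ℤ × ℤ × ℤ, gramForm a b v₁ v₂ = 1 ∧ gramForm a b v₂ v₂ = 0 := by
  rintro ⟨⟨p, q, r⟩, ⟨x, y, z⟩, h1, h2⟩
  simp only [gramForm] at h1 h2
  obtain ⟨k, hk⟩ := ha
  obtain ⟨l, hl⟩ := hb
  have two0 : (2 : ZMod 2) = 0 := rfl
  have ha2 : (a : ZMod 2) = 1 := by rw [hk]; push_cast; rw [two0]; ring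
  have hb2 : (b : ZMod 2) = 1 := by rw [hl]; push_cast; rw [two0]; ring
  -- divide the self-pairing equation by 2
  have h2' : (4 - a) * x * x - b * x * y + 2 * x * z - y * y = 0 := by nlinarith [h2]
  -- reduce mod 2
  have H2 := congrArg (Int.cast : ℤ → ZMod 2) h2'
  push_cast at H2
  rw [ha2, hb2, two0] at H2
  have key : ∀ u v w : ZMod 2, (4 - 1) * u * u - 1 * u * v + 0 * u * w - v * v = 0 →
      u = 0 ∧ v = 0 := by decide
  obtain ⟨hx, hy⟩ := key _ _ _ H2
  -- reduce the first equation mod 2 to get a contradiction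
  have H1 := congrArg (Int.cast : ℤ → ZMod 2) h1
  push_cast at H1
  rw [hx, hy, ha2, hb2, two0] at H1
  ring_nf at H1
  simp at H1
end

section
/- Let a and b be odd integers and let x, y, z be integers satisfying (8−2a)·x² − 2b·x·y + 4·x·z − 2·y² = 0. Then y is even. -/
/-- Let `a` and `b` be odd integers and let `x, y, z` be integers
satisfying `(8−2a)x² − 2bxy + 4xz − 2y² = 0`.  Then `y` is even. -/
theorem y_even_of_isotropic (a b x y z : ℤ) (ha : Odd a) (hb : Odd b)
    (hiso : (8 - 2 * a) * x ^ 2 - 2 * b * x * y + 4 * x * z - 2 * y ^ 2 = 0) :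
    Even y := by
  by_contra hy
  rw [Int.not_even_iff_odd] at hy
  have h2 : (4 - a) * x ^ 2 - b * x * y + 2 * x * z - y ^ 2 = 0 := by linarith
  have h3 := congrArg (Int.cast : ℤ → ZMod 2) h2
  push_cast at h3
  obtain ⟨k, hk⟩ := ha
  obtain ⟨l, hl⟩ := hb
  obtain ⟨m, hm⟩ := hy
  have hA : (a : ZMod 2) = 1 := by subst hk; push_cast; rw [show (2:ZMod 2)=0 from rfl]; ring
  have hB : (b : ZMod 2) = 1 := by subst hl; push_cast; rw [show (2:ZMod 2)=0 from rfl]; ring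
  have hY : (y : ZMod 2) = 1 := by subst hm; push_cast; rw [show (2:ZMod 2)=0 from rfl]; ring
  rw [hA, hB, hY] at h3
  have h2z : (2 : ZMod 2) * (x : ZMod 2) * (z : ZMod 2) = 0 := by
    have : (2 : ZMod 2) = 0 := by decide
    rw [this]; ring
  generalize (x : ZMod 2) = u at h3 h2z
  generalize (z : ZMod 2) = w at h3 h2z
  revert h3 h2z
  revert u w
  decide
end
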